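/- Among the square-free ternary words of length 8 beginning with 01, the word u = 01021201 admits exactly three distinct square-free shuffles of the form u ⧢_β u, namely 0102120102012101, 0102120102101201 and 0102101201021201, while the word u = 01201021 admits exactly one, namely 0102101201020121. -/

import Mathlib

def SqFreeWord {α : Type*} (w : List α) : Prop :=
  ∀ x : List α, x ≠ [] → ¬ (x ++ x) <:+: w

def condShuffle {α : Type*} : List Bool → List α → List α → List α
  | [], _, _ => []
  | (false :: β), (a :: u), v => a :: condShuffle β u v
  | (false :: _), [], _ => []
  | (true :: β), u, (a :: v) => a :: condShuffle β u v
  | (true :: _), _, [] => []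

def hasSq {α : Type*} [DecidableEq α] (w : List α) : Bool :=
  w.tails.any fun t => t.inits.any fun x => !x.isEmpty && decide (x ++ x <+: t)

lemma sqfree_iff {α : Type*} [DecidableEq α] (w : List α) :
    SqFreeWord w ↔ hasSq w = false := by
  rw [← Bool.not_eq_true, hasSq, List.any_eq_true]
  constructor
  · rintro h ⟨t, ht, hx⟩
    rw [List.any_eq_true] at hx
    obtain ⟨x, hxt, hx⟩ := hx
    simp only [Bool.and_eq_true, Bool.not_eq_true', List.isEmpty_eq_false_iff,
      decide_eq_true_eq] at hx
    exact h x hx.1 (List.infix_iff_prefix_suffix.2 ⟨t, hx.2, (List.mem_tails _ _).1 ht⟩)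
  · intro h x hx hinf
    obtain ⟨t, hpre, hsuf⟩ := List.infix_iff_prefix_suffix.1 hinf
    exact h ⟨t, (List.mem_tails _ _).2 hsuf, List.any_eq_true.2
      ⟨x, (List.mem_inits _ _).2 ((List.prefix_append x x).trans hpre),
        by simp [hx, hpre]⟩⟩

lemma count_add_count (l : List Bool) : l.count false + l.count true = l.length := by
  induction l with
  | nil => rfl
  | cons b l ih => cases b <;> simp [List.count_cons] <;> omega

lemma prefix_condShuffle {α : Type*} :
    ∀ (β₁ β₂ : List Bool) (u v : List α), condShuffle β₁ u v <+: condShuffle (β₁ ++ β₂) u v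
  | [], _, _, _ => List.nil_prefix
  | false :: β₁, β₂, [], v => List.nil_prefix
  | false :: β₁, β₂, a :: u, v => by
      obtain ⟨t, ht⟩ := prefix_condShuffle β₁ β₂ u v
      exact ⟨t, by simp [condShuffle, ht]⟩
  | true :: β₁, β₂, u, [] => List.nil_prefix
  | true :: β₁, β₂, u, a :: v => by
      obtain ⟨t, ht⟩ := prefix_condShuffle β₁ β₂ u v
      exact ⟨t, by simp [condShuffle, ht]⟩

def sqEnd {α : Type*} [DecidableEq α] (w : List α) : Bool :=
  (List.range (w.length / 2)).any fun i =>
    decide (w.drop (w.length - (i+1)) ++ w.drop (w.length - (i+1)) <:+ w)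

lemma not_sqFree_of_sqEnd {α : Type*} [DecidableEq α] {w : List α} (h : sqEnd w = true) :
    ¬ SqFreeWord w := by
  intro hsf
  rw [sqEnd, List.any_eq_true] at h
  obtain ⟨i, hi, h⟩ := h
  rw [List.mem_range] at hi
  rw [decide_eq_true_eq] at h
  apply hsf (w.drop (w.length - (i+1))) _ h.isInfix
  rw [Ne, List.drop_eq_nil_iff]
  omega

lemma sqFreeWord_of_prefix {α : Type*} {p w : List α} (hp : p <+: w) (hw : SqFreeWord w) :
    SqFreeWord p := fun x hx hinf => hw x hx (hinf.trans hp.isInfix)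

def ok (u : List (Fin 3)) (ws : List (List (Fin 3))) (β : List Bool) : Bool :=
  decide (β.count false = 8 → hasSq (condShuffle β u u) = false → condShuffle β u u ∈ ws)

def allOk (u : List (Fin 3)) (ws : List (List (Fin 3))) : ℕ → List Bool → Bool
  | 0, acc => ok u ws acc.reverse
  | n + 1, acc => sqEnd (condShuffle acc.reverse u u) ||
      (allOk u ws n (false :: acc) && allOk u ws n (true :: acc))

lemma allOk_sound (u : List (Fin 3)) (ws : List (List (Fin 3))) :
    ∀ n acc, allOk u ws n acc = true →
      ∀ γ : List Bool, γ.length = n → ok u ws (acc.reverse ++ γ) = true := by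
  intro n
  induction n with
  | zero =>
    intro acc h γ hγ
    rw [List.length_eq_zero_iff.1 hγ, List.append_nil]
    exact h
  | succ n ih =>
    intro acc h γ hγ
    rw [allOk, Bool.or_eq_true, Bool.and_eq_true] at h
    rcases h with h | h
    · apply decide_eq_true
      intro _ hsf
      exfalso
      have hpre := prefix_condShuffle acc.reverse γ u u
      exact not_sqFree_of_sqEnd h
        (sqFreeWord_of_prefix hpre ((sqfree_iff _).2 hsf))
    · rcases γ with _ | ⟨b, γ'⟩
      · simp at hγ
      · have hγ' : γ'.length = n := by simpa using hγ
        have hw : acc.reverse ++ b :: γ' = (b :: acc).reverse ++ γ' := by simp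
        rw [hw]
        cases b
        · exact ih (false :: acc) h.1 γ' hγ'
        · exact ih (true :: acc) h.2 γ' hγ'

def u1 : List (Fin 3) := [0,1,0,2,1,2,0,1]
def ws1 : List (List (Fin 3)) :=
  [[0,1,0,2,1,2,0,1,0,2,0,1,2,1,0,1], [0,1,0,2,1,2,0,1,0,2,1,0,1,2,0,1], [0,1,0,2,1,0,1,2,0,1,0,2,1,2,0,1]]
def u2 : List (Fin 3) := [0,1,2,0,1,0,2,1]
def ws2 : List (List (Fin 3)) := [[0,1,0,2,1,0,1,2,0,1,0,2,0,1,2,1]]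

set_option maxRecDepth 10000 in
set_option maxHeartbeats 1000000 in
lemma key1 : allOk u1 ws1 16 [] = true := by decide

set_option maxRecDepth 10000 in
set_option maxHeartbeats 1000000 in
lemma key2 : allOk u2 ws2 16 [] = true := by decide

theorem stmt18 :
    {w : List (Fin 3) | ∃ β : List Bool, β.count false = 8 ∧ β.count true = 8 ∧
        condShuffle β ([0,1,0,2,1,2,0,1] : List (Fin 3)) ([0,1,0,2,1,2,0,1] : List (Fin 3)) = w ∧ SqFreeWord w}
      = {[0,1,0,2,1,2,0,1,0,2,0,1,2,1,0,1], [0,1,0,2,1,2,0,1,0,2,1,0,1,2,0,1], [0,1,0,2,1,0,1,2,0,1,0,2,1,2,0,1]} ∧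
    {w : List (Fin 3) | ∃ β : List Bool, β.count false = 8 ∧ β.count true = 8 ∧
        condShuffle β ([0,1,2,0,1,0,2,1] : List (Fin 3)) ([0,1,2,0,1,0,2,1] : List (Fin 3)) = w ∧ SqFreeWord w}
      = {[0,1,0,2,1,0,1,2,0,1,0,2,0,1,2,1]} := by
  constructor
  · ext w
    simp only [Set.mem_setOf_eq, Set.mem_insert_iff, Set.mem_singleton_iff]
    constructor
    · rintro ⟨β, hf, ht, rfl, hsf⟩
      have hlen : β.length = 16 := by have := count_add_count β; omega
      have := allOk_sound u1 ws1 16 [] key1 β hlen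
      rw [List.reverse_nil, List.nil_append] at this
      have := of_decide_eq_true this hf ((sqfree_iff _).1 hsf)
      simpa [ws1, u1] using this
    · rintro (rfl | rfl | rfl)
      · exact ⟨[false,false,false,false,false,false,true,true,true,true,false,true,true,false,true,true],
          by decide, by decide, by decide, (sqfree_iff _).2 (by decide)⟩
      · exact ⟨[false,false,false,false,false,false,true,true,true,true,true,false,false,true,true,true],
          by decide, by decide, by decide, (sqfree_iff _).2 (by decide)⟩
      · exact ⟨[false,false,false,false,false,true,true,false,false,false,true,true,true,true,true,true],
          by decide, by decide, by decide, (sqfree_iff _).2 (by decide)⟩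
  · ext w
    simp only [Set.mem_setOf_eq, Set.mem_singleton_iff]
    constructor
    · rintro ⟨β, hf, ht, rfl, hsf⟩
      have hlen : β.length = 16 := by have := count_add_count β; omega
      have := allOk_sound u2 ws2 16 [] key2 β hlen
      rw [List.reverse_nil, List.nil_append] at this
      have := of_decide_eq_true this hf ((sqfree_iff _).1 hsf)
      simpa [ws2, u2] using this
    · rintro rfl
      exact ⟨[false,false,true,false,true,false,false,true,true,true,false,false,true,false,true,true],
        by decide, by decide, by decide, (sqfree_iff _).2 (by decide)⟩
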